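/- (Convergence of gradient descent for smooth convex functions) Let f : ℝ^m → ℝ be convex, differentiable, with L-Lipschitz gradient, and let w* be a minimizer of f. Let w^{(k)} be generated by gradient descent w^{(i+1)} = w^{(i)} − α ∇f(w^{(i)}) with fixed step size 0 < α ≤ 1/L. Then for all k ≥ 1, f(w^{(k)}) − f(w*) ≤ ‖w^{(0)} − w*‖² / (2kα). -/

import Mathlib

open InnerProductSpace intervalIntegral

variable {E : Type*} [NormedAddCommGroup E] [InnerProductSpace ℝ E] [CompleteSpace E]

local notation "⟪" x ", " y "⟫" => @inner ℝ _ _ x y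

lemma line_hasDerivAt (x v : E) (t : ℝ) :
    HasDerivAt (fun t : ℝ => x + t • v) v t := by
  simpa using ((hasDerivAt_id t).smul_const v).const_add x

lemma phi_hasDerivAt {f : E → ℝ} {g : E → E} (hf : ∀ x, HasGradientAt f (g x) x)
    (x v : E) (t : ℝ) :
    HasDerivAt (fun t : ℝ => f (x + t • v)) ⟪g (x + t • v), v⟫ t := by
  have h1 : HasFDerivAt f (toDual ℝ E (g (x + t • v))) (x + t • v) :=
    (hasGradientAt_iff_hasFDerivAt).1 (hf _)
  have h2 := h1.comp_hasDerivAt t (line_hasDerivAt x v t)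
  simp at h2
  exact h2

/-- subgradient inequality for convex differentiable functions -/
lemma subgrad {f : E → ℝ} {g : E → E} (hf : ∀ x, HasGradientAt f (g x) x)
    (hconv : ConvexOn ℝ Set.univ f) (x y : E) :
    f x + ⟪g x, y - x⟫ ≤ f y := by
  set v := y - x with hv
  have hphi : ConvexOn ℝ Set.univ (fun t : ℝ => f (x + t • v)) := by
    have h := hconv.comp_affineMap (AffineMap.lineMap x y : ℝ →ᵃ[ℝ] E)
    simp only [Set.preimage_univ] at h
    have heq : (f ∘ (AffineMap.lineMap x y : ℝ →ᵃ[ℝ] E)) = fun t : ℝ => f (x + t • v) := by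
      funext t
      simp only [Function.comp_apply, AffineMap.lineMap_apply_module, hv]
      congr 1
      module
    rwa [heq] at h
  have hd : HasDerivAt (fun t : ℝ => f (x + t • v)) ⟪g x, v⟫ 0 := by
    simpa using phi_hasDerivAt hf x v 0
  have h2 := hphi.le_slope_of_hasDerivAt (Set.mem_univ (0:ℝ)) (Set.mem_univ (1:ℝ))
    one_pos hd
  simp only [slope_def_field, div_one, zero_smul, add_zero, one_smul, sub_zero] at h2
  have h1 : x + v = y := by rw [hv]; abel
  rw [h1] at h2
  linarith

/-- descent lemma -/
lemma descent {f : E → ℝ} {g : E → E} (hf : ∀ x, HasGradientAt f (g x) x)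
    {L : ℝ} (hL : 0 < L) (hlip : ∀ x y, ‖g x - g y‖ ≤ L * ‖x - y‖) (x y : E) :
    f y ≤ f x + ⟪g x, y - x⟫ + L / 2 * ‖y - x‖ ^ 2 := by
  set v := y - x with hv
  have hgc : Continuous g := by
    have h : LipschitzWith (Real.toNNReal L) g := by
      apply LipschitzWith.of_dist_le_mul
      intro a b
      rw [dist_eq_norm, dist_eq_norm, Real.coe_toNNReal _ hL.le]
      exact hlip a b
    exact h.continuous
  have hψc : Continuous (fun t : ℝ => ⟪g (x + t • v), v⟫) :=
    (hgc.comp (by continuity)).inner continuous_const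
  have hftc := intervalIntegral.integral_eq_sub_of_hasDerivAt
    (f := fun t : ℝ => f (x + t • v)) (fun t _ => phi_hasDerivAt hf x v t)
    (hψc.intervalIntegrable 0 1)
  have hxy : x + (1:ℝ) • v = y := by rw [hv]; simp
  simp only [one_smul, zero_smul, add_zero] at hftc
  rw [hv] at hftc
  rw [add_sub_cancel] at hftc
  have hmono : ∫ t in (0:ℝ)..1, ⟪g (x + t • v), v⟫ ≤
      ∫ t in (0:ℝ)..1, (⟪g x, v⟫ + L * t * ‖v‖ ^ 2) := by
    apply intervalIntegral.integral_mono_on (by norm_num)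
      (hψc.intervalIntegrable 0 1)
      (by apply Continuous.intervalIntegrable; continuity)
    intro t ht
    rw [Set.mem_Icc] at ht
    have hinner : ⟪g (x + t • v) - g x, v⟫ ≤ ‖g (x + t • v) - g x‖ * ‖v‖ :=
      real_inner_le_norm _ _
    have hnorm : ‖g (x + t • v) - g x‖ ≤ L * (t * ‖v‖) := by
      calc ‖g (x + t • v) - g x‖ ≤ L * ‖x + t • v - x‖ := hlip _ _
        _ = L * (t * ‖v‖) := by
            rw [add_sub_cancel_left, norm_smul, Real.norm_eq_abs, abs_of_nonneg ht.1]
    have hvn : (0:ℝ) ≤ ‖v‖ := norm_nonneg v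
    nlinarith [inner_sub_left (𝕜 := ℝ) (g (x + t • v)) (g x) v]
  have hint2 : ∫ t in (0:ℝ)..1, (⟪g x, v⟫ + L * t * ‖v‖ ^ 2) =
      ⟪g x, v⟫ + L / 2 * ‖v‖ ^ 2 := by
    rw [intervalIntegral.integral_add (by apply Continuous.intervalIntegrable; continuity)
      (by apply Continuous.intervalIntegrable; continuity)]
    simp only [intervalIntegral.integral_const, smul_eq_mul, sub_zero, one_mul, mul_assoc]
    rw [intervalIntegral.integral_const_mul]
    rw [intervalIntegral.integral_mul_const, integral_id]
    ring
  rw [hint2] at hmono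
  rw [hftc] at hmono
  linarith


/-- Convergence of gradient descent with fixed step size `0 < α ≤ 1/L` for a
convex function with `L`-Lipschitz gradient:
`f(w^{(k)}) - f(w*) ≤ ‖w^{(0)} - w*‖² / (2 k α)`. -/
theorem gradient_descent_convergence {m : ℕ}
    (f : EuclideanSpace ℝ (Fin m) → ℝ)
    (f' : EuclideanSpace ℝ (Fin m) → EuclideanSpace ℝ (Fin m))
    (hf : ∀ x, HasGradientAt f (f' x) x)
    (hconv : ConvexOn ℝ Set.univ f)
    (L : ℝ) (hL : 0 < L)
    (hlip : ∀ x y, ‖f' x - f' y‖ ≤ L * ‖x - y‖)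
    (α : ℝ) (hα : 0 < α) (hαL : α ≤ 1 / L)
    (w : ℕ → EuclideanSpace ℝ (Fin m))
    (hiter : ∀ i : ℕ, w (i + 1) = w i - α • f' (w i))
    (wstar : EuclideanSpace ℝ (Fin m)) (hmin : ∀ x, f wstar ≤ f x) :
    ∀ k : ℕ, 1 ≤ k →
      f (w k) - f wstar ≤ ‖w 0 - wstar‖ ^ 2 / (2 * k * α) := by
  have hLα : L * α ≤ 1 := by
    rw [le_div_iff₀ hL] at hαL; linarith [hαL]
  -- descent step
  have step1 : ∀ i : ℕ, f (w (i + 1)) ≤ f (w i) - α / 2 * ‖f' (w i)‖ ^ 2 := by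
    intro i
    have hd := descent hf hL hlip (w i) (w (i + 1))
    have he : w (i + 1) - w i = -(α • f' (w i)) := by rw [hiter i]; abel
    rw [he] at hd
    have h1 : ⟪f' (w i), -(α • f' (w i))⟫_ℝ = -(α * ‖f' (w i)‖ ^ 2) := by
      rw [inner_neg_right, real_inner_smul_right, real_inner_self_eq_norm_sq]
    have h2 : ‖-(α • f' (w i))‖ ^ 2 = α ^ 2 * ‖f' (w i)‖ ^ 2 := by
      rw [norm_neg, norm_smul, Real.norm_eq_abs, abs_of_pos hα]; ring
    rw [h1, h2] at hd
    nlinarith [sq_nonneg ‖f' (w i)‖, sq_nonneg α]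
  -- per-step gap bound
  have step2 : ∀ i : ℕ, f (w (i + 1)) - f wstar ≤
      (‖w i - wstar‖ ^ 2 - ‖w (i + 1) - wstar‖ ^ 2) / (2 * α) := by
    intro i
    have hsg := subgrad hf hconv (w i) wstar
    have hsg' : f (w i) - f wstar ≤ ⟪f' (w i), w i - wstar⟫_ℝ := by
      have : ⟪f' (w i), wstar - w i⟫_ℝ = -⟪f' (w i), w i - wstar⟫_ℝ := by
        rw [← inner_neg_right, neg_sub]
      linarith [hsg, this ▸ hsg]
    have he : w (i + 1) - wstar = (w i - wstar) - α • f' (w i) := by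
      rw [hiter i]; abel
    have hexp : ‖w (i + 1) - wstar‖ ^ 2 =
        ‖w i - wstar‖ ^ 2 - 2 * α * ⟪f' (w i), w i - wstar⟫_ℝ
          + α ^ 2 * ‖f' (w i)‖ ^ 2 := by
      rw [he, @norm_sub_sq_real]
      rw [real_inner_smul_right, norm_smul, Real.norm_eq_abs, abs_of_pos hα]
      rw [real_inner_comm]
      ring
    have h1 := step1 i
    rw [hexp, le_div_iff₀ (by linarith : (0:ℝ) < 2 * α)]
    nlinarith [h1, hsg']
  -- f (w ·) is antitone
  have hanti : ∀ i j : ℕ, i ≤ j → f (w j) ≤ f (w i) := by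
    intro i j hij
    have : Antitone (fun n => f (w n)) := by
      apply antitone_nat_of_succ_le
      intro n
      have := step1 n
      nlinarith [sq_nonneg ‖f' (w n)‖]
    exact this hij
  intro k hk
  have hk0 : (0:ℝ) < (k:ℝ) := by exact_mod_cast Nat.lt_of_lt_of_le Nat.zero_lt_one hk
  -- telescoping sum bound
  have hsum : (k : ℝ) * (f (w k) - f wstar) ≤ ‖w 0 - wstar‖ ^ 2 / (2 * α) := by
    have h1 : (k : ℝ) * (f (w k) - f wstar) =
        ∑ i ∈ Finset.range k, (f (w k) - f wstar) := by
      rw [Finset.sum_const, Finset.card_range, nsmul_eq_mul]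
    have h2 : ∑ i ∈ Finset.range k, (f (w k) - f wstar) ≤
        ∑ i ∈ Finset.range k, (f (w (i + 1)) - f wstar) := by
      apply Finset.sum_le_sum
      intro i hi
      have : i + 1 ≤ k := Nat.succ_le_of_lt (Finset.mem_range.1 hi)
      linarith [hanti (i + 1) k this]
    have h3 : ∑ i ∈ Finset.range k, (f (w (i + 1)) - f wstar) ≤
        ∑ i ∈ Finset.range k,
          ((‖w i - wstar‖ ^ 2 - ‖w (i + 1) - wstar‖ ^ 2) / (2 * α)) := by
      exact Finset.sum_le_sum (fun i _ => step2 i)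
    have h4 : ∑ i ∈ Finset.range k,
        ((‖w i - wstar‖ ^ 2 - ‖w (i + 1) - wstar‖ ^ 2) / (2 * α)) =
        (‖w 0 - wstar‖ ^ 2 - ‖w k - wstar‖ ^ 2) / (2 * α) := by
      rw [← Finset.sum_div]
      congr 1
      exact Finset.sum_range_sub' (fun i => ‖w i - wstar‖ ^ 2) k
    have h5 : (‖w 0 - wstar‖ ^ 2 - ‖w k - wstar‖ ^ 2) / (2 * α) ≤
        ‖w 0 - wstar‖ ^ 2 / (2 * α) := by
      apply div_le_div_of_nonneg_right _ (by linarith)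
      · nlinarith [sq_nonneg ‖w k - wstar‖]
    linarith [h1 ▸ h2, h3, h4 ▸ h3, h5]
  have : f (w k) - f wstar ≤ ‖w 0 - wstar‖ ^ 2 / (2 * α) / k := by
    rw [div_div, le_div_iff₀ (by positivity)]
    calc (f (w k) - f wstar) * (2 * α * k) = (k * (f (w k) - f wstar)) * (2 * α) := by ring
      _ ≤ (‖w 0 - wstar‖ ^ 2 / (2 * α)) * (2 * α) := by
          apply mul_le_mul_of_nonneg_right hsum (by linarith)
      _ = ‖w 0 - wstar‖ ^ 2 := by field_simp
  calc f (w k) - f wstar ≤ ‖w 0 - wstar‖ ^ 2 / (2 * α) / k := this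
    _ = ‖w 0 - wstar‖ ^ 2 / (2 * k * α) := by rw [div_div]; ring_nf
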